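/- arXiv:0709.0764 — 2 statements merged into one kernel-verified Lean document; each statement's English description precedes it below -/
import Mathlib

section
/- For every positive integer n and natural number m, Γ(n+1)/Γ(n(m+1)+1) = n^{-nm} · ∏_{k=0}^{n-1} Γ(1 + (k+1)/n) / Γ(m + 1 + (k+1)/n). -/
open Real Finset

lemma gamma_add_nat' (x : ℝ) (hx : 0 < x) (p : ℕ) :
    Real.Gamma (x + p) = Real.Gamma x * ∏ k ∈ Finset.range p, (x + k) := by
  induction p with
  | zero => simp
  | succ p ih =>
    have h : x + (p : ℝ) ≠ 0 := by positivity
    have h2 : x + ((p : ℕ) + 1 : ℕ) = (x + p) + 1 := by push_cast; ring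
    rw [h2, Real.Gamma_add_one h, ih, Finset.prod_range_succ]
    ring

/-- `Γ(n+1)/Γ(n(m+1)+1) = n^{-nm} ∏_{k=0}^{n-1} Γ(1 + (k+1)/n) / Γ(m + 1 + (k+1)/n)`
for every positive integer `n` and natural number `m`. -/
theorem gamma_ratio_product (n : ℕ) (hn : 0 < n) (m : ℕ) :
    Gamma ((n : ℝ) + 1) / Gamma ((n : ℝ) * (m + 1) + 1)
      = ((n : ℝ) ^ (n * m))⁻¹ *
        ∏ k ∈ range n, Gamma (1 + ((k : ℝ) + 1) / n) / Gamma ((m : ℝ) + 1 + ((k : ℝ) + 1) / n) := by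
  have hn0 : (0 : ℝ) < n := by exact_mod_cast hn
  induction m with
  | zero =>
    have h1 : ∀ k ∈ range n,
        Gamma (1 + ((k : ℝ) + 1) / n) / Gamma (((0 : ℕ) : ℝ) + 1 + ((k : ℝ) + 1) / n) = 1 := by
      intro k _
      have hx : (0 : ℝ) < 1 + ((k : ℝ) + 1) / n := by positivity
      rw [show (((0 : ℕ) : ℝ) + 1 + ((k : ℝ) + 1) / n) = 1 + ((k : ℝ) + 1) / n by push_cast; ring,
        div_self (Real.Gamma_pos_of_pos hx).ne']
    rw [Finset.prod_congr rfl h1]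
    simp only [Finset.prod_const_one, Nat.mul_zero, pow_zero, inv_one, one_mul, Nat.cast_zero,
      zero_add, mul_one]
    exact div_self (Real.Gamma_pos_of_pos (by positivity)).ne'
  | succ m ih =>
    have hB : Gamma ((n : ℝ) * (((m + 1 : ℕ) : ℝ) + 1) + 1)
        = Gamma ((n : ℝ) * (m + 1) + 1) * ∏ k ∈ range n, ((n : ℝ) * (m + 1) + 1 + k) := by
      have h := gamma_add_nat' ((n : ℝ) * (m + 1) + 1) (by positivity) n
      rw [show (n : ℝ) * (((m + 1 : ℕ) : ℝ) + 1) + 1 = ((n : ℝ) * (m + 1) + 1) + n by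
        push_cast; ring, h]
    have hfac : ∀ k ∈ range n,
        Gamma (1 + ((k : ℝ) + 1) / n) / Gamma (((m + 1 : ℕ) : ℝ) + 1 + ((k : ℝ) + 1) / n)
        = (Gamma (1 + ((k : ℝ) + 1) / n) / Gamma ((m : ℝ) + 1 + ((k : ℝ) + 1) / n))
            * ((m : ℝ) + 1 + ((k : ℝ) + 1) / n)⁻¹ := by
      intro k _
      have hx : (0 : ℝ) < (m : ℝ) + 1 + ((k : ℝ) + 1) / n := by positivity
      rw [show ((m + 1 : ℕ) : ℝ) + 1 + ((k : ℝ) + 1) / n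
          = ((m : ℝ) + 1 + ((k : ℝ) + 1) / n) + 1 by push_cast; ring,
        Real.Gamma_add_one hx.ne']
      rw [mul_comm ((m : ℝ) + 1 + ((k : ℝ) + 1) / n), ← div_div, div_eq_mul_inv]
    rw [hB, Finset.prod_congr rfl hfac, Finset.prod_mul_distrib]
    have hP : ∏ k ∈ range n, ((n : ℝ) * (m + 1) + 1 + k)
        = (n : ℝ) ^ n * ∏ k ∈ range n, ((m : ℝ) + 1 + ((k : ℝ) + 1) / n) := by
      rw [show (n : ℝ) ^ n = ∏ _k ∈ range n, (n : ℝ) by simp, ← Finset.prod_mul_distrib]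
      refine Finset.prod_congr rfl fun k _ => ?_
      field_simp
      ring
    have hprodpos : (0 : ℝ) < ∏ k ∈ range n, ((m : ℝ) + 1 + ((k : ℝ) + 1) / n) :=
      Finset.prod_pos fun k _ => by positivity
    have hBm : Gamma ((n : ℝ) * (m + 1) + 1) ≠ 0 :=
      (Real.Gamma_pos_of_pos (by positivity)).ne'
    rw [div_mul_eq_div_div, ih, hP, show n * (m + 1) = n * m + n by ring, pow_add]
    rw [div_eq_iff (by positivity)]
    rw [Finset.prod_inv_distrib]
    field_simp
end

section
/- Let f(t) = pα e^{-αt} + qβ e^{-βt} with 0 < p < 1, q = 1−p, and β > α > 0. Then for every m ≥ 1 and t > 0, the m-fold convolution satisfies f^{*m}(t) = ∑_{j=0}^∞ γ_{m,j} · e(m+j, β; t), where e(k, β; t) = β^k t^{k-1} e^{-βt}/Γ(k) is the Erlang(k, β) density and γ_{m,j} = q^m (1 − α/β)^j ∑_{r=0}^m C(m,r) ((r)_j/j!) (αp/(βq))^r. -/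
open Real

/-- Convolution of two functions on `(0, ∞)`: `(g * h)(t) = ∫_0^t g(t-v) h(v) dv`. -/
noncomputable def conv (g h : ℝ → ℝ) : ℝ → ℝ := fun t => ∫ v in (0:ℝ)..t, g (t - v) * h v

/-- `cpm f g m = f^{*m} * g`, the `m`-fold self-convolution of `f` convolved with `g`
(with `f^{*0} * g = g`).  In particular `cpm f f m = f^{*(m+1)}`. -/
noncomputable def cpm (f g : ℝ → ℝ) : ℕ → ℝ → ℝ
  | 0 => g
  | m + 1 => conv f (cpm f g m)

open Finset

/-- Pochhammer symbol `(a)_j = a (a+1) ⋯ (a+j-1)`. -/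
noncomputable def poch (a : ℝ) (j : ℕ) : ℝ := ∏ k ∈ range j, (a + k)

/-- Erlang(k, β) density `e(k, β; t) = β^k t^{k-1} e^{-βt} / Γ(k)`. -/
noncomputable def erl (k : ℕ) (β t : ℝ) : ℝ := β ^ k * t ^ (k - 1 : ℤ) * exp (-β * t) / Gamma k

-- ### poch lemmas
lemma poch_zero (a : ℝ) : poch a 0 = 1 := by simp [poch]

lemma poch_succ (a : ℝ) (j : ℕ) : poch a (j + 1) = poch a j * (a + j) := by
  simp [poch, Finset.prod_range_succ]

lemma poch_succ' (a : ℝ) (j : ℕ) : poch a (j + 1) = a * poch (a + 1) j := by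
  rw [poch, Finset.prod_range_succ', poch]
  rw [show ((0:ℕ):ℝ) = 0 by norm_num, add_zero, mul_comm]
  congr 1
  refine Finset.prod_congr rfl fun k _ => ?_
  push_cast; ring

lemma poch_one (j : ℕ) : poch 1 j = j.factorial := by
  induction j with
  | zero => simp [poch_zero]
  | succ n ih => rw [poch_succ, ih, Nat.factorial_succ]; push_cast; ring

lemma poch_nonneg {a : ℝ} (ha : 0 ≤ a) (j : ℕ) : 0 ≤ poch a j :=
  Finset.prod_nonneg fun k _ => by positivity

lemma poch_hockey (a : ℝ) (n : ℕ) :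
    ∑ j ∈ range (n + 1), poch a j / j.factorial = poch (a + 1) n / n.factorial := by
  induction n with
  | zero => simp [poch_zero]
  | succ n ih =>
    rw [Finset.sum_range_succ, ih, poch_succ' a n, poch_succ (a + 1) n]
    have h1 : (n.factorial : ℝ) ≠ 0 := Nat.cast_ne_zero.mpr n.factorial_ne_zero
    have h2 : ((n + 1).factorial : ℝ) ≠ 0 := Nat.cast_ne_zero.mpr (n + 1).factorial_ne_zero
    rw [Nat.factorial_succ] at h2 ⊢
    push_cast at h2 ⊢
    field_simp
    ring

lemma poch_nat (r j : ℕ) : poch (r : ℝ) j = (r.ascFactorial j : ℝ) := by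
  induction j with
  | zero => simp [poch_zero]
  | succ n ih => rw [poch_succ, ih, Nat.ascFactorial_succ]; push_cast; ring

lemma poch_div_eq_choose (r j : ℕ) :
    poch (r : ℝ) j / j.factorial = ((r + j - 1).choose j : ℝ) := by
  rw [poch_nat, Nat.ascFactorial_eq_factorial_mul_choose']
  rw [div_eq_iff (Nat.cast_ne_zero.mpr j.factorial_ne_zero : (j.factorial:ℝ) ≠ 0)]
  push_cast; ring

lemma poch_div_le_choose (r j : ℕ) :
    poch (r : ℝ) j / j.factorial ≤ ((j + r).choose r : ℝ) := by
  rw [poch_div_eq_choose]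
  have h1 : (r + j - 1).choose j ≤ (j + r).choose j :=
    Nat.choose_le_choose j (by omega)
  have h2 : (j + r).choose j = (j + r).choose r := by
    exact Nat.choose_symm_add
  exact_mod_cast h2 ▸ h1

lemma summable_poch_geom {x : ℝ} (h0 : 0 ≤ x) (h1 : x < 1) (r : ℕ) :
    Summable (fun j => poch (r : ℝ) j / j.factorial * x ^ j) := by
  have hs : Summable (fun j : ℕ => ((j + r).choose r : ℝ) * x ^ j) :=
    summable_choose_mul_geometric_of_norm_lt_one r (by rwa [Real.norm_eq_abs, abs_of_nonneg h0])
  refine Summable.of_nonneg_of_le (fun j => ?_) (fun j => ?_) hs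
  · have := poch_nonneg (by positivity : (0:ℝ) ≤ (r:ℝ)) j
    positivity
  · exact mul_le_mul_of_nonneg_right (poch_div_le_choose r j) (by positivity)

-- ### gamma coefficients
lemma poch_zero_left (j : ℕ) : poch 0 (j + 1) = 0 := by rw [poch_succ']; ring

lemma poch_zero_div (j : ℕ) : poch 0 j / j.factorial = if j = 0 then 1 else 0 := by
  cases j with
  | zero => simp [poch_zero]
  | succ n => simp [poch_zero_left]

noncomputable def gam (q x y : ℝ) (m j : ℕ) : ℝ :=
  q ^ m * x ^ j * ∑ r ∈ range (m + 1), (m.choose r : ℝ) * (poch r j / j.factorial) * y ^ r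

noncomputable def dd (q w x : ℝ) (i : ℕ) : ℝ := (if i = 0 then q else 0) + w * x ^ i

lemma gam_one (q x y : ℝ) (j : ℕ) : gam q x y 1 j = dd q (q * y) x j := by
  rw [gam, dd]
  rw [show (1:ℕ) + 1 = 2 by rfl, Finset.sum_range_succ, Finset.sum_range_one]
  simp only [Nat.choose_self, Nat.choose_zero_right, Nat.cast_one, Nat.cast_zero,
    poch_zero_div, poch_one, pow_zero, pow_one, one_mul, mul_one]
  have : (j.factorial : ℝ) ≠ 0 := Nat.cast_ne_zero.mpr j.factorial_ne_zero
  rw [div_self this]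
  cases j with
  | zero => simp; ring
  | succ n => simp; ring

lemma gam_nonneg {q x y : ℝ} (hq : 0 ≤ q) (hx : 0 ≤ x) (hy : 0 ≤ y) (m j : ℕ) :
    0 ≤ gam q x y m j := by
  refine mul_nonneg (mul_nonneg (by positivity) (by positivity)) ?_
  refine Finset.sum_nonneg fun r _ => ?_
  have h1 := poch_nonneg (by positivity : (0:ℝ) ≤ (r:ℝ)) j
  positivity

lemma dd_nonneg {q w x : ℝ} (hq : 0 ≤ q) (hw : 0 ≤ w) (hx : 0 ≤ x) (i : ℕ) :
    0 ≤ dd q w x i := by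
  rw [dd]; have : (0:ℝ) ≤ (if i = 0 then q else 0) := by split <;> simp [hq]
  positivity

lemma dd_le {q w x : ℝ} (hq : 0 ≤ q) (hw : 0 ≤ w) (hx : 0 ≤ x) (hx1 : x ≤ 1) (i : ℕ) :
    dd q w x i ≤ q + w := by
  rw [dd]
  have h1 : (if i = 0 then q else 0) ≤ q := by split <;> simp [hq]
  have h2 : w * x ^ i ≤ w * 1 := by
    refine mul_le_mul_of_nonneg_left ?_ hw
    exact pow_le_one₀ hx hx1
  nlinarith

lemma summable_dd {q w x : ℝ} (h0 : 0 ≤ x) (h1 : x < 1) : Summable (dd q w x) := by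
  unfold dd
  refine Summable.add ?_ (Summable.mul_left w (summable_geometric_of_lt_one h0 h1))
  exact summable_of_finite_support (Set.Finite.subset (Set.finite_singleton 0) (by
    intro i hi; simp only [Function.mem_support] at hi
    by_contra h; simp only [Set.mem_singleton_iff] at h; simp [h] at hi))

lemma summable_gam {q x y : ℝ} (hq : 0 ≤ q) (h0 : 0 ≤ x) (h1 : x < 1) (hy : 0 ≤ y) (m : ℕ) :
    Summable (gam q x y m) := by
  have : gam q x y m = fun j => ∑ r ∈ range (m + 1),
      (q ^ m * (m.choose r : ℝ) * y ^ r) * (poch r j / j.factorial * x ^ j) := by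
    funext j; rw [gam, Finset.mul_sum]
    exact Finset.sum_congr rfl fun r _ => by ring
  rw [this]
  exact summable_sum fun r _ => (summable_poch_geom h0 h1 r).mul_left _

lemma choose_poch_step (y : ℝ) (m n : ℕ) :
    ∑ r ∈ range (m + 1 + 1), (((m + 1).choose r : ℕ) : ℝ) * (poch r n / n.factorial) * y ^ r
      = ∑ r ∈ range (m + 1), (m.choose r : ℝ) * (poch r n / n.factorial) * y ^ r
        + y * ∑ r ∈ range (m + 1), (m.choose r : ℝ) * (poch ((r : ℝ) + 1) n / n.factorial) * y ^ r := by
  rw [Finset.sum_range_succ'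
    (fun r => (((m + 1).choose r : ℕ) : ℝ) * (poch r n / n.factorial) * y ^ r) (m + 1)]
  rw [Finset.sum_range_succ'
    (fun r => ((m.choose r : ℕ) : ℝ) * (poch r n / n.factorial) * y ^ r) m]
  have hsplit : ∀ r ∈ range (m + 1),
      (((m + 1).choose (r + 1) : ℕ) : ℝ) * (poch (↑(r + 1)) n / n.factorial) * y ^ (r + 1)
      = ((m.choose (r + 1) : ℕ) : ℝ) * (poch (↑(r + 1)) n / n.factorial) * y ^ (r + 1)
        + y * (((m.choose r : ℕ) : ℝ) * (poch ((r : ℝ) + 1) n / n.factorial) * y ^ r) := by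
    intro r _
    rw [Nat.choose_succ_succ]
    push_cast
    ring
  rw [Finset.sum_congr rfl hsplit, Finset.sum_add_distrib, ← Finset.mul_sum]
  rw [Finset.sum_range_succ
    (fun r => ((m.choose (r + 1) : ℕ) : ℝ) * (poch (↑(r + 1)) n / n.factorial) * y ^ (r + 1)) m]
  simp only [Nat.choose_succ_self, Nat.cast_zero, zero_mul, add_zero, Nat.choose_zero_right]
  ring

-- the key coefficient recursion
lemma gam_step (q x y : ℝ) (m n : ℕ) :
    ∑ ji ∈ Finset.HasAntidiagonal.antidiagonal n, gam q x y m ji.1 * dd q (q * y) x ji.2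
      = gam q x y (m + 1) n := by
  rw [Finset.Nat.sum_antidiagonal_eq_sum_range_succ_mk]
  simp only [dd, mul_add]
  rw [Finset.sum_add_distrib]
  have e1 : ∑ k ∈ range (n + 1), gam q x y m k * (if n - k = 0 then q else 0)
      = gam q x y m n * q := by
    rw [Finset.sum_eq_single n]
    · simp
    · intro k hk hkn
      simp only [Finset.mem_range] at hk
      rw [if_neg (by omega), mul_zero]
    · intro h; exact absurd (Finset.self_mem_range_succ n) h
  have e2 : ∀ k ∈ range (n + 1), gam q x y m k * (q * y * x ^ (n - k))
      = q ^ (m + 1) * x ^ n * (y * ∑ r ∈ range (m + 1),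
          (m.choose r : ℝ) * (poch r k / k.factorial) * y ^ r) := by
    intro k hk
    simp only [Finset.mem_range] at hk
    rw [gam]
    have : x ^ k * x ^ (n - k) = x ^ n := by rw [← pow_add]; congr 1; omega
    rw [show q ^ m * x ^ k * (∑ r ∈ range (m + 1), (m.choose r : ℝ) *
        (poch r k / k.factorial) * y ^ r) * (q * y * x ^ (n - k))
      = q ^ m * q * (x ^ k * x ^ (n - k)) * (y * ∑ r ∈ range (m + 1),
          (m.choose r : ℝ) * (poch r k / k.factorial) * y ^ r) by ring, this,
      pow_succ]
  rw [e1, Finset.sum_congr rfl e2, ← Finset.mul_sum]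
  have swap' : ∑ k ∈ range (n + 1), (y * ∑ r ∈ range (m + 1),
      (m.choose r : ℝ) * (poch r k / k.factorial) * y ^ r)
      = y * ∑ r ∈ range (m + 1),
          (m.choose r : ℝ) * (poch ((r : ℝ) + 1) n / n.factorial) * y ^ r := by
    rw [← Finset.mul_sum, Finset.sum_comm]
    congr 1
    refine Finset.sum_congr rfl fun r _ => ?_
    calc ∑ k ∈ range (n + 1), (m.choose r : ℝ) * (poch r k / k.factorial) * y ^ r
        = ((m.choose r : ℝ) * y ^ r) * ∑ k ∈ range (n + 1), poch r k / k.factorial := by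
          rw [Finset.mul_sum]; exact Finset.sum_congr rfl fun k _ => by ring
      _ = _ := by rw [poch_hockey]; ring
  rw [swap', gam, gam, choose_poch_step y m n, pow_succ]
  ring
-- ### erl lemmas
lemma erl_eq (k : ℕ) (β t : ℝ) :
    erl (k + 1) β t = β ^ (k + 1) * t ^ k * exp (-β * t) / k.factorial := by
  rw [erl]
  have h1 : ((k + 1 : ℕ) : ℤ) - 1 = (k : ℤ) := by push_cast; ring
  rw [h1, zpow_natCast]
  have h2 : Real.Gamma ((k + 1 : ℕ) : ℝ) = k.factorial := by
    push_cast
    exact_mod_cast Real.Gamma_nat_eq_factorial k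
  rw [h2]

lemma erl_continuous (k : ℕ) (β : ℝ) : Continuous (fun t => erl (k + 1) β t) := by
  have : (fun t => erl (k + 1) β t)
      = fun t => β ^ (k + 1) * t ^ k * exp (-β * t) / k.factorial := by
    funext t; exact erl_eq k β t
  rw [this]
  fun_prop

lemma erl_nonneg {β : ℝ} (hβ : 0 < β) (k : ℕ) {t : ℝ} (ht : 0 ≤ t) :
    0 ≤ erl (k + 1) β t := by
  rw [erl_eq]; positivity

lemma pow_div_factorial_le_exp {x : ℝ} (hx : 0 ≤ x) (k : ℕ) :
    x ^ k / k.factorial ≤ exp x := by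
  calc x ^ k / k.factorial ≤ ∑ i ∈ range (k + 1), x ^ i / i.factorial := by
        rw [Finset.sum_range_succ]
        refine le_add_of_nonneg_left (Finset.sum_nonneg fun i _ => by positivity)
    _ ≤ exp x := Real.sum_le_exp_of_nonneg hx (k + 1)

lemma erl_le {β : ℝ} (hβ : 0 < β) (k : ℕ) {t : ℝ} (ht : 0 ≤ t) :
    erl (k + 1) β t ≤ β := by
  rw [erl_eq]
  have h1 : β ^ (k + 1) * t ^ k * exp (-β * t) / k.factorial
      = β * ((β * t) ^ k / k.factorial) * exp (-(β * t)) := by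
    rw [mul_pow]; field_simp; ring
  rw [h1]
  have h2 : (β * t) ^ k / k.factorial ≤ exp (β * t) :=
    pow_div_factorial_le_exp (by positivity) k
  calc β * ((β * t) ^ k / k.factorial) * exp (-(β * t))
      ≤ β * exp (β * t) * exp (-(β * t)) :=
        mul_le_mul_of_nonneg_right (mul_le_mul_of_nonneg_left h2 hβ.le) (Real.exp_pos _).le
    _ = β := by rw [mul_assoc, ← Real.exp_add]; simp

-- scaled bound on a segment for the (t - v) argument
lemma erl_le' {β : ℝ} (hβ : 0 < β) (k : ℕ) {s : ℝ} (hs : 0 ≤ s) {t : ℝ} (hst : s ≤ t) :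
    erl (k + 1) β s ≤ β * (β * t) ^ k / k.factorial := by
  have hR : β * (β * t) ^ k / k.factorial = β ^ (k + 1) * t ^ k * 1 / k.factorial := by
    rw [mul_pow]; ring
  rw [erl_eq, hR]
  have ht0 : (0:ℝ) ≤ t := hs.trans hst
  gcongr <;> first
    | positivity
    | exact mul_nonneg (by positivity) (pow_nonneg ht0 k)
    | exact pow_le_pow_left₀ hs hst k
    | (rw [Real.exp_le_one_iff]; nlinarith)

-- ### the Beta-type integral
lemma integral_beta_nat : ∀ (b a : ℕ) (t : ℝ),
    ∫ v in (0:ℝ)..t, (t - v) ^ a * v ^ b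
      = (a.factorial * b.factorial / (a + b + 1).factorial) * t ^ (a + b + 1) := by
  intro b
  induction b with
  | zero =>
    intro a t
    have : ∀ v : ℝ, (t - v) ^ a * v ^ 0 = (t - v) ^ a := fun v => by simp
    simp only [this]
    rw [intervalIntegral.integral_comp_sub_left (fun u => u ^ a) t]
    simp only [sub_zero, sub_self]
    rw [integral_pow]
    have hfa : (a.factorial : ℝ) ≠ 0 := Nat.cast_ne_zero.mpr a.factorial_ne_zero
    have h1 : ((a + 0 + 1).factorial : ℝ) = ((a : ℝ) + 1) * a.factorial := by
      rw [Nat.add_zero, Nat.factorial_succ]; push_cast; ring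
    rw [h1, zero_pow (by omega : a + 1 ≠ 0), sub_zero, Nat.factorial_zero]
    push_cast
    field_simp
  | succ b ih =>
    intro a t
    have hd : ∀ x : ℝ, HasDerivAt (fun y => -((t - y) ^ (a + 1)) / ((a : ℝ) + 1))
        ((t - x) ^ a) x := by
      intro x
      have h1 : HasDerivAt (fun y : ℝ => t - y) (-1) x := (hasDerivAt_id x).const_sub t
      have h2 := h1.pow (a + 1)
      have h3 := h2.neg.div_const ((a : ℝ) + 1)
      convert h3 using 1
      all_goals try rfl
      have ha1 : ((a : ℝ) + 1) ≠ 0 := by positivity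
      push_cast
      field_simp
    have hu : ∀ x ∈ Set.uIcc (0:ℝ) t, HasDerivAt (fun y : ℝ => y ^ (b + 1))
        (((b : ℝ) + 1) * x ^ b) x := by
      intro x _
      have := hasDerivAt_pow (b + 1) x
      simpa using this
    have hparts := intervalIntegral.integral_mul_deriv_eq_deriv_mul hu
      (fun x _ => hd x)
      (Continuous.intervalIntegrable (by fun_prop) 0 t)
      (Continuous.intervalIntegrable (by fun_prop) 0 t)
    have hflip : ∫ v in (0:ℝ)..t, (t - v) ^ a * v ^ (b + 1)
        = ∫ v in (0:ℝ)..t, v ^ (b + 1) * (t - v) ^ a := by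
      refine intervalIntegral.integral_congr fun v _ => ?_
      ring
    rw [hflip, hparts]
    have e0 : (t - t) ^ (a + 1) = 0 := by simp
    have e1 : (0:ℝ) ^ (b + 1) = 0 := by simp
    rw [e0]
    simp only [neg_zero, zero_div, mul_zero, e1, zero_mul, zero_sub, sub_zero, zero_mul]
    have hmove : ∫ x in (0:ℝ)..t, ((b : ℝ) + 1) * x ^ b * (-((t - x) ^ (a + 1)) / ((a : ℝ) + 1))
        = (-(((b : ℝ) + 1) / ((a : ℝ) + 1))) * ∫ x in (0:ℝ)..t, (t - x) ^ (a + 1) * x ^ b := by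
      rw [← intervalIntegral.integral_const_mul]
      refine intervalIntegral.integral_congr fun v _ => ?_
      ring
    rw [hmove, ih (a + 1) t]
    have hfa : (a.factorial : ℝ) ≠ 0 := Nat.cast_ne_zero.mpr a.factorial_ne_zero
    have hfb : (b.factorial : ℝ) ≠ 0 := Nat.cast_ne_zero.mpr b.factorial_ne_zero
    have hfab : (((a + b + 2).factorial : ℕ) : ℝ) ≠ 0 :=
      Nat.cast_ne_zero.mpr (a + b + 2).factorial_ne_zero
    have exp_eq : a + 1 + b + 1 = a + b + 2 := by omega
    have exp_eq2 : a + (b + 1) + 1 = a + b + 2 := by omega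
    rw [show (a + 1).factorial = (a + 1) * a.factorial from Nat.factorial_succ a,
      show (b + 1).factorial = (b + 1) * b.factorial from Nat.factorial_succ b, exp_eq, exp_eq2]
    have ha1 : ((a : ℝ) + 1) ≠ 0 := by positivity
    push_cast
    field_simp
-- ### Erlang convolution
lemma erl_conv (β : ℝ) (a b : ℕ) (t : ℝ) :
    conv (erl (a + 1) β) (erl (b + 1) β) t = erl (a + b + 2) β t := by
  rw [conv]
  have key : ∀ v : ℝ, erl (a + 1) β (t - v) * erl (b + 1) β v
      = (β ^ (a + b + 2) * exp (-β * t) / (a.factorial * b.factorial)) * ((t - v) ^ a * v ^ b) := by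
    intro v
    have hexp : exp (-β * (t - v)) * exp (-β * v) = exp (-β * t) := by
      rw [← Real.exp_add]; congr 1; ring
    rw [erl_eq, erl_eq]
    rw [show β ^ (a + 1) * (t - v) ^ a * exp (-β * (t - v)) / a.factorial *
          (β ^ (b + 1) * v ^ b * exp (-β * v) / b.factorial)
        = (β ^ (a + 1) * β ^ (b + 1) / (a.factorial * b.factorial)) * ((t - v) ^ a * v ^ b) *
          (exp (-β * (t - v)) * exp (-β * v)) by ring]
    rw [hexp]
    have hp : β ^ (a + 1) * β ^ (b + 1) = β ^ (a + b + 2) := by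
      rw [← pow_add]; congr 1; omega
    rw [hp]
    ring
  rw [intervalIntegral.integral_congr (fun v _ => key v), intervalIntegral.integral_const_mul,
    integral_beta_nat b a t]
  rw [show a + b + 2 = (a + b + 1) + 1 from rfl, erl_eq]
  have hfa : (a.factorial : ℝ) ≠ 0 := Nat.cast_ne_zero.mpr a.factorial_ne_zero
  have hfb : (b.factorial : ℝ) ≠ 0 := Nat.cast_ne_zero.mpr b.factorial_ne_zero
  have hfab : ((a + b + 1).factorial : ℝ) ≠ 0 := Nat.cast_ne_zero.mpr (a + b + 1).factorial_ne_zero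
  field_simp

-- ### interchanging tsum and interval integral
lemma integral_tsum_interval {t : ℝ} (ht : 0 < t) (g : ℕ → ℝ → ℝ) (B : ℕ → ℝ)
    (hc : ∀ i, Continuous (g i))
    (hb : ∀ i, ∀ v ∈ Set.Ioc (0:ℝ) t, |g i v| ≤ B i)
    (hBs : Summable B) :
    ∫ v in (0:ℝ)..t, (∑' i, g i v) = ∑' i, ∫ v in (0:ℝ)..t, g i v := by
  have hB0 : ∀ i, 0 ≤ B i := fun i =>
    le_trans (abs_nonneg _) (hb i t ⟨ht, le_refl t⟩)
  rw [intervalIntegral.integral_of_le ht.le]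
  have := MeasureTheory.integral_tsum (μ := MeasureTheory.volume.restrict (Set.Ioc (0:ℝ) t))
    (f := g) (fun i => (hc i).aestronglyMeasurable.restrict) ?_
  · rw [this]
    refine tsum_congr fun i => ?_
    rw [intervalIntegral.integral_of_le ht.le]
  · have hle : ∀ i, (∫⁻ v in Set.Ioc (0:ℝ) t, ‖g i v‖₊ ∂MeasureTheory.volume)
        ≤ ENNReal.ofReal (B i) * ENNReal.ofReal t := by
      intro i
      have h1 : (∫⁻ v in Set.Ioc (0:ℝ) t, ‖g i v‖₊ ∂MeasureTheory.volume)
          ≤ ∫⁻ _ in Set.Ioc (0:ℝ) t, ENNReal.ofReal (B i) ∂MeasureTheory.volume := by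
        refine MeasureTheory.setLIntegral_mono_ae (by fun_prop) ?_
        filter_upwards with v hv
        rw [← enorm_eq_nnnorm, ← ofReal_norm, Real.norm_eq_abs]
        exact ENNReal.ofReal_le_ofReal (hb i v hv)
      rw [MeasureTheory.setLIntegral_const, Real.volume_Ioc, sub_zero] at h1
      exact h1
    refine ne_of_lt (lt_of_le_of_lt (ENNReal.tsum_le_tsum hle) ?_)
    rw [ENNReal.tsum_mul_right, ← ENNReal.ofReal_tsum_of_nonneg hB0 hBs]
    exact ENNReal.mul_lt_top ENNReal.ofReal_lt_top ENNReal.ofReal_lt_top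
-- ### the mixed exponential density as an Erlang mixture
section mixture

variable {p q α β : ℝ} (hp : 0 < p) (hp1 : p < 1) (hq : q = 1 - p) (hα : 0 < α) (hαβ : α < β)

lemma hasSum_exp_erl (hα : 0 < α) (hαβ : α < β) (c : ℝ) (s : ℝ) :
    HasSum (fun i => (c / β) * (1 - α / β) ^ i * erl (i + 1) β s) (c * exp (-α * s)) := by
  have hβ : 0 < β := lt_trans hα hαβ
  have hx : β * (1 - α / β) = β - α := by field_simp
  have h0 : HasSum (fun i : ℕ => ((β - α) * s) ^ i / i.factorial) (exp ((β - α) * s)) := by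
    rw [Real.exp_eq_exp_ℝ]
    exact NormedSpace.expSeries_div_hasSum_exp ((β - α) * s)
  have h1 := h0.mul_left (c * exp (-β * s))
  have heq : (fun i => c * exp (-β * s) * (((β - α) * s) ^ i / i.factorial))
      = fun i => (c / β) * (1 - α / β) ^ i * erl (i + 1) β s := by
    funext i
    rw [erl_eq]
    have : (β - α) ^ i = β ^ i * (1 - α / β) ^ i := by
      rw [← mul_pow, hx]
    rw [mul_pow, this]
    field_simp
    ring
  rw [heq] at h1
  have : c * exp (-β * s) * exp ((β - α) * s) = c * exp (-α * s) := by
    rw [mul_assoc, ← Real.exp_add]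
    congr 2
    ring
  rwa [this] at h1

lemma hasSum_f_erl {f : ℝ → ℝ}
    (hf : f = fun t => p * α * exp (-α * t) + q * β * exp (-β * t))
    (hα : 0 < α) (hαβ : α < β) (s : ℝ) :
    HasSum (fun i => dd q (p * α / β) (1 - α / β) i * erl (i + 1) β s) (f s) := by
  have hβ : 0 < β := lt_trans hα hαβ
  have h1 : HasSum (fun i : ℕ => (if i = 0 then q * erl 1 β s else 0)) (q * erl 1 β s) :=
    hasSum_ite_eq 0 (q * erl 1 β s)
  have h2 := hasSum_exp_erl (β := β) hα hαβ (p * α) s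
  have h3 := h1.add h2
  have heq : (fun i : ℕ => (if i = 0 then q * erl 1 β s else 0)
        + (p * α / β) * (1 - α / β) ^ i * erl (i + 1) β s)
      = fun i => dd q (p * α / β) (1 - α / β) i * erl (i + 1) β s := by
    funext i
    rw [dd, add_mul]
    congr 1
    cases i with
    | zero => simp
    | succ n => simp
  rw [heq] at h3
  have : q * erl 1 β s + p * α * exp (-α * s) = f s := by
    rw [hf, show (1:ℕ) = 0 + 1 from rfl, erl_eq]
    simp only [pow_one, pow_zero, Nat.factorial_zero, Nat.cast_one, mul_one, one_mul, div_one]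
    ring
  rwa [this] at h3

lemma f_bound {f : ℝ → ℝ}
    (hf : f = fun t => p * α * exp (-α * t) + q * β * exp (-β * t))
    (hp : 0 < p) (hq0 : 0 < q) (hα : 0 < α) (hβ : 0 < β) {s : ℝ} (hs : 0 ≤ s) :
    |f s| ≤ p * α + q * β := by
  simp only [hf]
  have e1 : exp (-α * s) ≤ 1 := by rw [Real.exp_le_one_iff]; nlinarith
  have e2 : exp (-β * s) ≤ 1 := by rw [Real.exp_le_one_iff]; nlinarith
  have p1 : 0 < exp (-α * s) := Real.exp_pos _
  have p2 : 0 < exp (-β * s) := Real.exp_pos _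
  rw [abs_of_nonneg (by positivity)]
  have g1 : p * α * exp (-α * s) ≤ p * α * 1 :=
    mul_le_mul_of_nonneg_left e1 (by positivity)
  have g2 : q * β * exp (-β * s) ≤ q * β * 1 :=
    mul_le_mul_of_nonneg_left e2 (by positivity)
  linarith

lemma f_continuous {f : ℝ → ℝ}
    (hf : f = fun t => p * α * exp (-α * t) + q * β * exp (-β * t)) : Continuous f := by
  rw [hf]; fun_prop

-- the core convolution identity: f * Erlang
lemma conv_f_erl {f : ℝ → ℝ}
    (hf : f = fun t => p * α * exp (-α * t) + q * β * exp (-β * t))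
    (hp : 0 < p) (hq0 : 0 < q) (hα : 0 < α) (hαβ : α < β)
    (k : ℕ) {t : ℝ} (ht : 0 < t) :
    conv f (erl (k + 1) β) t
      = ∑' i, dd q (p * α / β) (1 - α / β) i * erl (k + 2 + i) β t := by
  have hβ : 0 < β := lt_trans hα hαβ
  have hx0 : 0 ≤ 1 - α / β := by
    have : α / β < 1 := (div_lt_one hβ).mpr hαβ
    linarith
  have hw0 : 0 ≤ p * α / β := by positivity
  rw [conv]
  have hrepr : ∀ v : ℝ, f (t - v) * erl (k + 1) β v
      = ∑' i, (dd q (p * α / β) (1 - α / β) i * erl (i + 1) β (t - v)) * erl (k + 1) β v := by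
    intro v
    rw [← (hasSum_f_erl hf hα hαβ (t - v)).tsum_eq]
    exact (tsum_mul_right).symm
  rw [intervalIntegral.integral_congr fun v _ => hrepr v]
  rw [integral_tsum_interval ht _
      (fun i => (q + p * α / β) * (β * (β * t) ^ i / i.factorial) * β) ?_ ?_ ?_]
  · refine tsum_congr fun i => ?_
    have : (fun v => dd q (p * α / β) (1 - α / β) i * erl (i + 1) β (t - v) * erl (k + 1) β v)
        = fun v => dd q (p * α / β) (1 - α / β) i * (erl (i + 1) β (t - v) * erl (k + 1) β v) := by
      funext v; ring
    rw [this, intervalIntegral.integral_const_mul]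
    have hconv : (∫ v in (0:ℝ)..t, erl (i + 1) β (t - v) * erl (k + 1) β v)
        = conv (erl (i + 1) β) (erl (k + 1) β) t := rfl
    rw [hconv, erl_conv]
    rw [show i + k + 2 = k + 2 + i by omega]
  · intro i
    have h1 : Continuous (fun v => erl (i + 1) β (t - v)) :=
      (erl_continuous i β).comp (continuous_const.sub continuous_id)
    exact (continuous_const.mul h1).mul (erl_continuous k β)
  · intro i v hv
    have hv1 : (0:ℝ) ≤ t - v := by linarith [hv.2]
    have hv2 : t - v ≤ t := by linarith [hv.1]
    have hd0 : 0 ≤ dd q (p * α / β) (1 - α / β) i :=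
      dd_nonneg (by linarith) hw0 hx0 i
    have he1 : 0 ≤ erl (i + 1) β (t - v) := erl_nonneg hβ i hv1
    have he2 : 0 ≤ erl (k + 1) β v := erl_nonneg hβ k hv.1.le
    rw [abs_of_nonneg (by positivity)]
    have b1 : dd q (p * α / β) (1 - α / β) i ≤ q + p * α / β :=
      dd_le (by linarith) hw0 hx0 (by nlinarith [div_pos hα hβ, (div_lt_one hβ).mpr hαβ]) i
    have b2 : erl (i + 1) β (t - v) ≤ β * (β * t) ^ i / i.factorial := erl_le' hβ i hv1 hv2
    have b3 : erl (k + 1) β v ≤ β := erl_le hβ k hv.1.le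
    have hb2nn : (0:ℝ) ≤ β * (β * t) ^ i / i.factorial := by positivity
    calc dd q (p * α / β) (1 - α / β) i * erl (i + 1) β (t - v) * erl (k + 1) β v
        ≤ (q + p * α / β) * (β * (β * t) ^ i / i.factorial) * β := by
          refine mul_le_mul (mul_le_mul b1 b2 he1 (by linarith)) b3 he2 ?_
          positivity
      _ = _ := rfl
  · refine Summable.mul_right β (Summable.mul_left _ ?_)
    have := Real.summable_pow_div_factorial (β * t)
    exact this.mul_left β |>.congr fun i => by ring

end mixture
-- ### the main induction
set_option maxHeartbeats 2000000 in
lemma key_induction {p q α β : ℝ} (hp : 0 < p) (hp1 : p < 1) (hq : q = 1 - p)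
    (hα : 0 < α) (hαβ : α < β) {f : ℝ → ℝ}
    (hf : f = fun t => p * α * exp (-α * t) + q * β * exp (-β * t)) :
    ∀ n : ℕ, ∀ t : ℝ, 0 < t →
      cpm f f n t
        = ∑' j, gam q (1 - α / β) (α * p / (β * q)) (n + 1) j * erl (n + j + 1) β t := by
  have hβ : 0 < β := lt_trans hα hαβ
  have hq0 : 0 < q := by rw [hq]; linarith
  have hx0 : 0 ≤ 1 - α / β := by
    have : α / β < 1 := (div_lt_one hβ).mpr hαβ
    linarith
  have hx1 : 1 - α / β < 1 := by
    have : 0 < α / β := div_pos hα hβ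
    linarith
  have hy0 : 0 ≤ α * p / (β * q) := by positivity
  have hw : q * (α * p / (β * q)) = p * α / β := by field_simp
  have hw0 : 0 ≤ p * α / β := by positivity
  set x := 1 - α / β with hxdef
  set y := α * p / (β * q) with hydef
  intro n
  induction n with
  | zero =>
    intro t ht
    show f t = _
    rw [← (hasSum_f_erl hf hα hαβ t).tsum_eq]
    refine tsum_congr fun j => ?_
    rw [gam_one, hw, show 0 + j + 1 = j + 1 by omega]
  | succ n ih =>
    intro t ht
    show conv f (cpm f f n) t = _
    rw [conv, intervalIntegral.integral_of_le ht.le]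
    rw [MeasureTheory.setIntegral_congr_fun (μ := MeasureTheory.volume) measurableSet_Ioc
      (g := fun v => ∑' j, f (t - v) * (gam q x y (n + 1) j * erl (n + j + 1) β v))
      (fun v hv => by
        simp only
        rw [ih v hv.1]
        exact tsum_mul_left.symm)]
    rw [← intervalIntegral.integral_of_le ht.le]
    rw [integral_tsum_interval ht _ (fun j => (p * α + q * β) * gam q x y (n + 1) j * β)
      ?_ ?_ ?_]
    · -- main computation chain
      have step1 : ∀ j : ℕ, (∫ v in (0:ℝ)..t, f (t - v) * (gam q x y (n + 1) j * erl (n + j + 1) β v))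
          = gam q x y (n + 1) j * conv f (erl (n + j + 1) β) t := by
        intro j
        rw [show (fun v => f (t - v) * (gam q x y (n + 1) j * erl (n + j + 1) β v))
            = fun v => gam q x y (n + 1) j * (f (t - v) * erl (n + j + 1) β v) from
          funext fun v => by ring]
        rw [intervalIntegral.integral_const_mul]
        rfl
      rw [tsum_congr step1]
      have step2 : ∀ j : ℕ, gam q x y (n + 1) j * conv f (erl (n + j + 1) β) t
          = ∑' i, gam q x y (n + 1) j * (dd q (q * y) x i * erl (n + j + 2 + i) β t) := by
        intro j
        rw [conv_f_erl hf hp hq0 hα hαβ (n + j) ht, ← tsum_mul_left]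
        refine tsum_congr fun i => ?_
        rw [hw, show n + j + 2 + i = n + j + 1 + 1 + i by omega]
      rw [tsum_congr step2]
      -- switch to a double sum over ℕ × ℕ and regroup along antidiagonals
      set a : ℕ × ℕ → ℝ := fun ji =>
        gam q x y (n + 1) ji.1 * dd q (q * y) x ji.2 * erl (n + (ji.1 + ji.2) + 2) β t
        with ha
      have hsum : Summable a := by
        have h1 : Summable (fun ji : ℕ × ℕ => gam q x y (n + 1) ji.1 * dd q (q * y) x ji.2) :=
          Summable.mul_of_nonneg (summable_gam hq0.le hx0 hx1 hy0 (n + 1))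
            (summable_dd hx0 hx1)
            (fun j => gam_nonneg hq0.le hx0 hy0 (n + 1) j)
            (fun i => dd_nonneg hq0.le (hw ▸ hw0) hx0 i)
        refine Summable.of_nonneg_of_le (fun ji => ?_) (fun ji => ?_) (h1.mul_right β)
        · have he : 0 ≤ erl (n + (ji.1 + ji.2) + 2) β t := by
            rw [show n + (ji.1 + ji.2) + 2 = (n + (ji.1 + ji.2) + 1) + 1 by omega]
            exact erl_nonneg hβ _ ht.le
          have := gam_nonneg hq0.le hx0 hy0 (n + 1) ji.1
          have := dd_nonneg hq0.le (hw ▸ hw0) hx0 ji.2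
          rw [ha]
          positivity
        · rw [ha]
          have he : erl (n + (ji.1 + ji.2) + 2) β t ≤ β := by
            rw [show n + (ji.1 + ji.2) + 2 = (n + (ji.1 + ji.2) + 1) + 1 by omega]
            exact erl_le hβ _ ht.le
          have hg := gam_nonneg hq0.le hx0 hy0 (n + 1) ji.1
          have hd := dd_nonneg hq0.le (hw ▸ hw0) hx0 ji.2
          exact mul_le_mul_of_nonneg_left he (by positivity)
      have step3 : ∀ j : ℕ, (∑' i, gam q x y (n + 1) j * (dd q (q * y) x i * erl (n + j + 2 + i) β t))
          = ∑' i, a (j, i) := by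
        intro j
        refine tsum_congr fun i => ?_
        rw [ha]
        simp only
        rw [show n + j + 2 + i = n + (j + i) + 2 by omega]
        ring
      rw [tsum_congr step3]
      rw [← hsum.tsum_prod]
      rw [← Finset.HasAntidiagonal.sigmaAntidiagonalEquivProd.tsum_eq a]
      rw [Summable.tsum_sigma (f := fun σ : (Σ N : ℕ, {x // x ∈ Finset.HasAntidiagonal.antidiagonal N}) =>
          a (Finset.HasAntidiagonal.sigmaAntidiagonalEquivProd σ))
        (Finset.HasAntidiagonal.sigmaAntidiagonalEquivProd.summable_iff.mpr hsum)]
      refine tsum_congr fun N => ?_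
      have hfin : (∑' c : {x // x ∈ Finset.HasAntidiagonal.antidiagonal N} ,
          a (Finset.HasAntidiagonal.sigmaAntidiagonalEquivProd ⟨N, c⟩)) = ∑ ji ∈ Finset.HasAntidiagonal.antidiagonal N, a ji := by
        have : ∀ c : {x // x ∈ Finset.HasAntidiagonal.antidiagonal N},
            a (Finset.HasAntidiagonal.sigmaAntidiagonalEquivProd ⟨N, c⟩) = a (c : ℕ × ℕ) := fun c => rfl
        rw [tsum_congr this]
        exact Finset.tsum_subtype (Finset.HasAntidiagonal.antidiagonal N) a
      rw [hfin]
      have hsum_eq : ∑ ji ∈ Finset.HasAntidiagonal.antidiagonal N, a ji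
          = ∑ ji ∈ Finset.HasAntidiagonal.antidiagonal N,
              (gam q x y (n + 1) ji.1 * dd q (q * y) x ji.2) * erl (n + N + 2) β t := by
        refine Finset.sum_congr rfl fun ji hji => ?_
        rw [ha]
        simp only
        rw [Finset.HasAntidiagonal.mem_antidiagonal] at hji
        rw [hji]
      rw [hsum_eq, ← Finset.sum_mul, gam_step q x y (n + 1) N]
      rw [show n + N + 2 = n + 1 + N + 1 by omega]
    · intro j
      have h1 : Continuous (fun v : ℝ => f (t - v)) :=
        (f_continuous hf).comp (continuous_const.sub continuous_id)
      exact h1.mul (continuous_const.mul (erl_continuous (n + j) β))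
    · intro j v hv
      have hv1 : (0:ℝ) ≤ t - v := by linarith [hv.2]
      have hg := gam_nonneg hq0.le hx0 hy0 (n + 1) j
      have he0 : 0 ≤ erl (n + j + 1) β v := erl_nonneg hβ (n + j) hv.1.le
      have he : erl (n + j + 1) β v ≤ β := erl_le hβ (n + j) hv.1.le
      have hfb := f_bound hf hp hq0 hα hβ hv1
      rw [abs_mul, abs_of_nonneg (by positivity : 0 ≤ gam q x y (n + 1) j * erl (n + j + 1) β v)]
      calc |f (t - v)| * (gam q x y (n + 1) j * erl (n + j + 1) β v)
          ≤ (p * α + q * β) * (gam q x y (n + 1) j * β) := by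
            refine mul_le_mul hfb (mul_le_mul_of_nonneg_left he hg) (by positivity) ?_
            nlinarith
        _ = (p * α + q * β) * gam q x y (n + 1) j * β := by ring
    · have := (summable_gam hq0.le hx0 hx1 hy0 (n + 1)).mul_left (p * α + q * β)
      exact this.mul_right β

/-- The `m`-fold convolution of the mixed exponential density
`f(t) = pα e^{-αt} + qβ e^{-βt}` is an infinite Erlang mixture:
`f^{*m}(t) = ∑_{j=0}^∞ γ_{m,j} e(m+j, β; t)` with
`γ_{m,j} = q^m (1-α/β)^j ∑_{r=0}^m C(m,r) ((r)_j/j!) (αp/(βq))^r`. -/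
theorem mixed_exponential_convolution (p q α β : ℝ) (hp : 0 < p) (hp1 : p < 1)
    (hq : q = 1 - p) (hα : 0 < α) (hαβ : α < β)
    (f : ℝ → ℝ) (hf : f = fun t => p * α * exp (-α * t) + q * β * exp (-β * t)) :
    ∀ (m : ℕ), 1 ≤ m → ∀ t : ℝ, 0 < t →
      cpm f f (m - 1) t
        = ∑' j : ℕ,
            (q ^ m * (1 - α / β) ^ j *
              ∑ r ∈ range (m + 1), (m.choose r : ℝ) * (poch r j / j.factorial) * (α * p / (β * q)) ^ r)
            * erl (m + j) β t := by
  intro m hm t ht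
  obtain ⟨n, rfl⟩ : ∃ n, m = n + 1 := ⟨m - 1, by omega⟩
  have hkey := key_induction hp hp1 hq hα hαβ hf n t ht
  rw [show n + 1 - 1 = n by omega, hkey]
  refine tsum_congr fun j => ?_
  rw [gam, show n + 1 + j = n + j + 1 by omega]
end
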